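/- The system of equations x = y, x² - 2 = z x - y, x² + y² + z² = x y z with x > 2, y > 2, z > 2 has exactly one real solution (x, y, z). -/

import Mathlib

private def fq (x : ℝ) : ℝ := x^5 - 2*x^4 - 4*x^3 + 3*x^2 + 4*x - 4

private lemma fq_root_exists : ∃ x ∈ Set.Icc (2.8:ℝ) 3, fq x = 0 := by
  have hc : ContinuousOn fq (Set.Icc (2.8:ℝ) 3) := by
    unfold fq; fun_prop
  have h := intermediate_value_Icc (by norm_num : (2.8:ℝ) ≤ 3) hc
  have h0 : (0:ℝ) ∈ Set.Icc (fq 2.8) (fq 3) := by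
    constructor <;> (unfold fq; norm_num)
  obtain ⟨x, hx, hfx⟩ := h h0
  exact ⟨x, hx, hfx⟩

private lemma root_bounds {x : ℝ} (hx : 2 < x) (h : fq x = 0) :
    2.8 ≤ x ∧ x ≤ 3 := by
  unfold fq at h
  constructor
  · by_contra hlt
    push_neg at hlt
    have ht : 0 < x - 2 := by linarith
    have ht8 : x - 2 < 0.8 := by linarith
    nlinarith [pow_pos ht 2, pow_pos ht 3, pow_pos ht 4, pow_pos ht 5,
      mul_pos (mul_pos ht ht) ht, sq_nonneg (x-2)]
  · by_contra hgt
    push_neg at hgt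
    have ht : 0 < x - 3 := by linarith
    nlinarith [pow_pos ht 2, pow_pos ht 3, pow_pos ht 4, pow_pos ht 5]

private lemma root_unique {a b : ℝ} (ha : a ∈ Set.Icc (2.8:ℝ) 3) (hb : b ∈ Set.Icc (2.8:ℝ) 3)
    (hfa : fq a = 0) (hfb : fq b = 0) : a = b := by
  obtain ⟨ha1, _⟩ := ha
  obtain ⟨hb1, _⟩ := hb
  unfold fq at hfa hfb
  have hg : 0 < a^4+a^3*b+a^2*b^2+a*b^3+b^4 - 2*(a^3+a^2*b+a*b^2+b^3)
      - 4*(a^2+a*b+b^2) + 3*(a+b) + 4 := by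
    nlinarith [mul_nonneg (sub_nonneg.mpr ha1) (sub_nonneg.mpr hb1), sq_nonneg (a-b),
      mul_nonneg (mul_nonneg (sub_nonneg.mpr ha1) (sub_nonneg.mpr hb1)) (sub_nonneg.mpr hb1),
      sq_nonneg (a*b - 8)]
  have hfac : (a - b) * (a^4+a^3*b+a^2*b^2+a*b^3+b^4 - 2*(a^3+a^2*b+a*b^2+b^3)
      - 4*(a^2+a*b+b^2) + 3*(a+b) + 4) = 0 := by
    linear_combination hfa - hfb
  rcases mul_eq_zero.mp hfac with h | h
  · linarith
  · linarith

theorem fricke_system_unique_solution :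
    ∃! p : ℝ × ℝ × ℝ,
      p.1 = p.2.1 ∧
      p.1 ^ 2 - 2 = p.2.2 * p.1 - p.2.1 ∧
      p.1 ^ 2 + p.2.1 ^ 2 + p.2.2 ^ 2 = p.1 * p.2.1 * p.2.2 ∧
      2 < p.1 ∧ 2 < p.2.1 ∧ 2 < p.2.2 := by
  obtain ⟨x₀, ⟨hx₀1, hx₀2⟩, hfx₀⟩ := fq_root_exists
  have hx₀pos : (0:ℝ) < x₀ := by linarith
  set z₀ : ℝ := x₀ + 1 - 2 / x₀ with hz₀def
  have hz₀x : z₀ * x₀ = x₀^2 + x₀ - 2 := by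
    rw [hz₀def]; have h2 : 2 / x₀ * x₀ = 2 := div_mul_cancel₀ _ (ne_of_gt hx₀pos)
    linear_combination (-1 : ℝ) * h2
  have hfq : x₀^5 - 2*x₀^4 - 4*x₀^3 + 3*x₀^2 + 4*x₀ - 4 = 0 := hfx₀
  have hfricke : x₀^2 + x₀^2 + z₀^2 - x₀ * x₀ * z₀ = 0 := by
    have hmul : x₀^2 * (x₀^2 + x₀^2 + z₀^2 - x₀ * x₀ * z₀) = 0 := by
      linear_combination (-1) * hfq + (z₀*x₀ + x₀^2 + x₀ - 2 - x₀^3) * hz₀x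
    rcases mul_eq_zero.mp hmul with h | h
    · exact absurd h (pow_ne_zero 2 (ne_of_gt hx₀pos))
    · exact h
  have hz₀gt : 2 < z₀ := by
    have hdiv : 2 / x₀ < 1 := by
      rw [div_lt_one hx₀pos]; linarith
    rw [hz₀def]; linarith
  refine ⟨(x₀, x₀, z₀), ⟨rfl, ?_, ?_, ?_, ?_, ?_⟩, ?_⟩
  · simp only; linarith [hz₀x]
  · simp only; linarith [hfricke]
  · simp only; linarith
  · simp only; linarith
  · simpa using hz₀gt
  · rintro ⟨x, y, z⟩ ⟨hxy, h2, h3, hx2, hy2, hz2⟩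
    simp only at hxy h2 h3 hx2 hy2 hz2 ⊢
    subst hxy
    have hxpos : (0:ℝ) < x := by linarith
    have hzx : z * x = x^2 + x - 2 := by linarith
    have hroot : fq x = 0 := by
      unfold fq
      linear_combination (-(x^2)) * h3 + (z*x + x^2 + x - 2 - x^3) * hzx
    have hb := root_bounds hx2 hroot
    have hxx : x = x₀ := root_unique ⟨hb.1, hb.2⟩ ⟨hx₀1, hx₀2⟩ hroot hfx₀
    subst hxx
    have hzz : z = z₀ := by
      have h' : z * x = z₀ * x := by rw [hzx, hz₀x]
      exact mul_right_cancel₀ (ne_of_gt hxpos) h'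
    rw [hzz]
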